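/- Let r ∈ (0, 1/2), θ₀ = arccos(2r), and φ(θ) = arccos(cos θ/(2r)) on (θ₀, π - θ₀). Then φ' is strictly decreasing on (θ₀, π/2] and strictly increasing on [π/2, π - θ₀), with minimum value 1/(2r) at θ = π/2, and φ'(θ) → +∞ as θ → θ₀⁺ and as θ → (π - θ₀)⁻. -/

import Mathlib

open Real Filter

private lemma stmt15_hasDeriv {a : ℝ} (ha0 : 0 < a) {θ : ℝ} (hc : |Real.cos θ| < a) :
    HasDerivAt (fun θ => Real.arccos (Real.cos θ / a))
      (Real.sin θ / Real.sqrt (a ^ 2 - Real.cos θ ^ 2)) θ := by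
  have hc2 : Real.cos θ ^ 2 < a ^ 2 := by
    rw [← sq_abs]
    exact pow_lt_pow_left₀ hc (abs_nonneg _) two_ne_zero
  have hpos : 0 < a ^ 2 - Real.cos θ ^ 2 := by linarith
  have hane : a ≠ 0 := ne_of_gt ha0
  have hne1 : Real.cos θ / a ≠ 1 := by
    intro h
    rw [div_eq_one_iff_eq hane] at h
    rw [h, abs_of_pos ha0] at hc
    exact lt_irrefl a hc
  have hne1' : Real.cos θ / a ≠ -1 := by
    intro h
    have : Real.cos θ = -a := by field_simp at h; linarith
    rw [this, abs_neg, abs_of_pos ha0] at hc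
    exact lt_irrefl a hc
  have habs : |Real.cos θ / a| < 1 := by
    rw [abs_div, abs_of_pos ha0]
    exact (div_lt_one ha0).2 hc
  have h01 : (Real.cos θ / a) ^ 2 < 1 := by
    rw [← sq_abs]
    nlinarith [abs_nonneg (Real.cos θ / a)]
  have hd1 : HasDerivAt (fun θ => Real.cos θ / a) (-Real.sin θ / a) θ :=
    (Real.hasDerivAt_cos θ).div_const a
  have hd2 := (Real.hasDerivAt_arccos hne1' hne1).comp θ hd1
  refine hd2.congr_deriv ?_
  have hrw : Real.sqrt (a ^ 2 - Real.cos θ ^ 2) = a * Real.sqrt (1 - (Real.cos θ / a) ^ 2) := by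
    rw [show a ^ 2 - Real.cos θ ^ 2 = a ^ 2 * (1 - (Real.cos θ / a) ^ 2) by field_simp,
      Real.sqrt_mul (sq_nonneg a), Real.sqrt_sq ha0.le]
  have hs0 : Real.sqrt (1 - (Real.cos θ / a) ^ 2) ≠ 0 :=
    ne_of_gt (Real.sqrt_pos.2 (by linarith))
  rw [hrw]
  field_simp

theorem stmt_15 (r θ₀ : ℝ) (hr : r ∈ Set.Ioo (0 : ℝ) (1/2))
    (hθ₀ : θ₀ = Real.arccos (2 * r))
    (φ : ℝ → ℝ) (hφ : ∀ θ, φ θ = Real.arccos (Real.cos θ / (2 * r))) :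
    StrictAntiOn (deriv φ) (Set.Ioc θ₀ (π / 2)) ∧
    StrictMonoOn (deriv φ) (Set.Ico (π / 2) (π - θ₀)) ∧
    deriv φ (π / 2) = 1 / (2 * r) ∧
    (∀ θ ∈ Set.Ioo θ₀ (π - θ₀), 1 / (2 * r) ≤ deriv φ θ) ∧
    Tendsto (deriv φ) (nhdsWithin θ₀ (Set.Ioi θ₀)) atTop ∧
    Tendsto (deriv φ) (nhdsWithin (π - θ₀) (Set.Iio (π - θ₀))) atTop := by
  obtain ⟨hr0, hr2⟩ := hr
  set a : ℝ := 2 * r with ha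
  have ha0 : 0 < a := by positivity
  have ha1 : a < 1 := by rw [ha]; linarith
  have ha2 : a ^ 2 < 1 := by nlinarith
  have hθ0pos : 0 < θ₀ := hθ₀ ▸ Real.arccos_pos.2 ha1
  have hθ0lt : θ₀ < π / 2 := hθ₀ ▸ Real.arccos_lt_pi_div_two.2 ha0
  have hcosθ0 : Real.cos θ₀ = a := hθ₀ ▸ Real.cos_arccos (by linarith) ha1.le
  have hπlt : π / 2 < π - θ₀ := by linarith
  set g : ℝ → ℝ := fun θ => Real.sin θ / Real.sqrt (a ^ 2 - Real.cos θ ^ 2) with hg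
  have hmem : ∀ θ ∈ Set.Ioo θ₀ (π - θ₀), |Real.cos θ| < a := by
    intro θ hθ
    have h1 : Real.cos θ < a := by
      rw [← hcosθ0]
      exact Real.cos_lt_cos_of_nonneg_of_le_pi hθ0pos.le (by linarith [hθ.2, hθ0pos]) hθ.1
    have h2 : -a < Real.cos θ := by
      have := Real.cos_lt_cos_of_nonneg_of_le_pi
        (by linarith [hθ.1] : (0:ℝ) ≤ θ) (by linarith : π - θ₀ ≤ π) hθ.2
      rw [Real.cos_pi_sub, hcosθ0] at this
      linarith
    rw [abs_lt]; exact ⟨h2, h1⟩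
  have hdpos : ∀ θ ∈ Set.Ioo θ₀ (π - θ₀), 0 < a ^ 2 - Real.cos θ ^ 2 := by
    intro θ hθ
    have := hmem θ hθ
    have h2 : Real.cos θ ^ 2 < a ^ 2 := by
      rw [← sq_abs]
      exact pow_lt_pow_left₀ this (abs_nonneg _) two_ne_zero
    linarith
  have hφeq : φ = fun θ => Real.arccos (Real.cos θ / a) := funext hφ
  have hderiv : ∀ θ ∈ Set.Ioo θ₀ (π - θ₀), deriv φ θ = g θ := by
    intro θ hθ
    rw [hφeq]
    exact (stmt15_hasDeriv ha0 (hmem θ hθ)).deriv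
  have hsin : ∀ θ ∈ Set.Ioo θ₀ (π - θ₀), 0 < Real.sin θ := by
    intro θ hθ
    exact Real.sin_pos_of_pos_of_lt_pi (by linarith [hθ.1]) (by linarith [hθ.2, hθ0pos])
  have hgpos : ∀ θ ∈ Set.Ioo θ₀ (π - θ₀), 0 < g θ := by
    intro θ hθ
    exact div_pos (hsin θ hθ) (Real.sqrt_pos.2 (hdpos θ hθ))
  have hgsq : ∀ θ ∈ Set.Ioo θ₀ (π - θ₀), g θ ^ 2 =
      Real.sin θ ^ 2 / (a ^ 2 - Real.cos θ ^ 2) := by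
    intro θ hθ
    rw [hg]
    rw [div_pow, Real.sq_sqrt (hdpos θ hθ).le]
  have hsin2 : ∀ θ : ℝ, Real.sin θ ^ 2 = 1 - Real.cos θ ^ 2 := by
    intro θ
    have := Real.sin_sq_add_cos_sq θ
    linarith
  -- key comparison lemma
  have key : ∀ x ∈ Set.Ioo θ₀ (π - θ₀), ∀ y ∈ Set.Ioo θ₀ (π - θ₀),
      Real.cos y ^ 2 < Real.cos x ^ 2 → g y < g x := by
    intro x hx y hy hcc
    have hsq : g y ^ 2 < g x ^ 2 := by
      rw [hgsq x hx, hgsq y hy, div_lt_div_iff₀ (hdpos y hy) (hdpos x hx),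
        hsin2 x, hsin2 y]
      nlinarith [mul_pos (sub_pos.2 hcc) (sub_pos.2 ha2)]
    exact lt_of_pow_lt_pow_left₀ 2 (hgpos x hx).le hsq
  have hmemIoc : ∀ x ∈ Set.Ioc θ₀ (π / 2), x ∈ Set.Ioo θ₀ (π - θ₀) := by
    intro x hx; exact ⟨hx.1, by linarith [hx.2]⟩
  have hmemIco : ∀ x ∈ Set.Ico (π / 2) (π - θ₀), x ∈ Set.Ioo θ₀ (π - θ₀) := by
    intro x hx; exact ⟨by linarith [hx.1], hx.2⟩
  have hpi2mem : π / 2 ∈ Set.Ioo θ₀ (π - θ₀) := ⟨hθ0lt, hπlt⟩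
  have hgpi2 : g (π / 2) = 1 / a := by
    rw [hg]
    simp only [Real.cos_pi_div_two, Real.sin_pi_div_two]
    rw [show (0:ℝ) ^ 2 = 0 by ring, sub_zero, Real.sqrt_sq ha0.le]
  refine ⟨?_, ?_, ?_, ?_, ?_, ?_⟩
  · -- StrictAntiOn on Ioc θ₀ (π/2)
    intro x hx y hy hxy
    have hx' := hmemIoc x hx
    have hy' := hmemIoc y hy
    rw [hderiv x hx', hderiv y hy']
    apply key x hx' y hy'
    have hcy : 0 ≤ Real.cos y :=
      Real.cos_nonneg_of_mem_Icc ⟨by linarith [hy.1, Real.pi_pos], hy.2⟩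
    have hcxy : Real.cos y < Real.cos x :=
      Real.cos_lt_cos_of_nonneg_of_le_pi (by linarith [hx.1]) (by linarith [hy.2, Real.pi_pos]) hxy
    exact pow_lt_pow_left₀ hcxy hcy two_ne_zero
  · -- StrictMonoOn on Ico (π/2) (π - θ₀)
    intro x hx y hy hxy
    have hx' := hmemIco x hx
    have hy' := hmemIco y hy
    rw [hderiv x hx', hderiv y hy']
    apply key y hy' x hx'
    have hcx : Real.cos x ≤ 0 :=
      Real.cos_nonpos_of_pi_div_two_le_of_le hx.1 (by linarith [hy.2, hθ0pos, Real.pi_pos])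
    have hcxy : Real.cos y < Real.cos x :=
      Real.cos_lt_cos_of_nonneg_of_le_pi (by linarith [hx'.1]) (by linarith [hy.2]) hxy
    nlinarith
  · rw [hderiv _ hpi2mem, hgpi2]
  · -- min value
    intro θ hθ
    rw [hderiv θ hθ]
    have hsq : (1 / a) ^ 2 ≤ g θ ^ 2 := by
      rw [hgsq θ hθ, div_pow, one_pow, div_le_div_iff₀ (by positivity) (hdpos θ hθ), hsin2]
      nlinarith [mul_nonneg (sq_nonneg (Real.cos θ)) (sub_nonneg.2 ha2.le)]
    exact le_of_pow_le_pow_left₀ two_ne_zero (hgpos θ hθ).le hsq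
  · -- tendsto at θ₀⁺
    have hIoo : Set.Ioo θ₀ (π - θ₀) ∈ nhdsWithin θ₀ (Set.Ioi θ₀) :=
      Ioo_mem_nhdsGT_of_mem ⟨le_refl _, by linarith⟩
    have hsinθ0 : 0 < Real.sin θ₀ :=
      Real.sin_pos_of_pos_of_lt_pi hθ0pos (by linarith [Real.pi_pos])
    have hnum : Tendsto Real.sin (nhdsWithin θ₀ (Set.Ioi θ₀)) (nhds (Real.sin θ₀)) :=
      (Real.continuous_sin.tendsto θ₀).mono_left nhdsWithin_le_nhds
    have hden : Tendsto (fun θ => Real.sqrt (a ^ 2 - Real.cos θ ^ 2))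
        (nhdsWithin θ₀ (Set.Ioi θ₀)) (nhdsWithin 0 (Set.Ioi 0)) := by
      apply tendsto_nhdsWithin_of_tendsto_nhds_of_eventually_within
      · have hcont : Continuous (fun θ => Real.sqrt (a ^ 2 - Real.cos θ ^ 2)) :=
          Real.continuous_sqrt.comp (continuous_const.sub (Real.continuous_cos.pow 2))
        have := (hcont.tendsto θ₀).mono_left (nhdsWithin_le_nhds (s := Set.Ioi θ₀))
        simpa [hcosθ0] using this
      · filter_upwards [hIoo] with θ hθ
        exact Real.sqrt_pos.2 (hdpos θ hθ)
    have hinv : Tendsto (fun θ => (Real.sqrt (a ^ 2 - Real.cos θ ^ 2))⁻¹)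
        (nhdsWithin θ₀ (Set.Ioi θ₀)) atTop := tendsto_inv_nhdsGT_zero.comp hden
    have hgt : Tendsto g (nhdsWithin θ₀ (Set.Ioi θ₀)) atTop := by
      have := Filter.Tendsto.pos_mul_atTop hsinθ0 hnum hinv
      simpa [hg, div_eq_mul_inv] using this
    apply hgt.congr'
    filter_upwards [hIoo] with θ hθ
    exact (hderiv θ hθ).symm
  · -- tendsto at (π - θ₀)⁻
    have hIoo : Set.Ioo θ₀ (π - θ₀) ∈ nhdsWithin (π - θ₀) (Set.Iio (π - θ₀)) :=
      Ioo_mem_nhdsLT_of_mem ⟨by linarith, le_refl _⟩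
    have hsinθ0 : 0 < Real.sin (π - θ₀) := by
      rw [Real.sin_pi_sub]
      exact Real.sin_pos_of_pos_of_lt_pi hθ0pos (by linarith [Real.pi_pos])
    have hnum : Tendsto Real.sin (nhdsWithin (π - θ₀) (Set.Iio (π - θ₀)))
        (nhds (Real.sin (π - θ₀))) :=
      (Real.continuous_sin.tendsto _).mono_left nhdsWithin_le_nhds
    have hden : Tendsto (fun θ => Real.sqrt (a ^ 2 - Real.cos θ ^ 2))
        (nhdsWithin (π - θ₀) (Set.Iio (π - θ₀))) (nhdsWithin 0 (Set.Ioi 0)) := by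
      apply tendsto_nhdsWithin_of_tendsto_nhds_of_eventually_within
      · have hcont : Continuous (fun θ => Real.sqrt (a ^ 2 - Real.cos θ ^ 2)) :=
          Real.continuous_sqrt.comp (continuous_const.sub (Real.continuous_cos.pow 2))
        have h0 : Real.cos (π - θ₀) ^ 2 = a ^ 2 := by
          rw [Real.cos_pi_sub, hcosθ0]; ring
        have := (hcont.tendsto (π - θ₀)).mono_left
          (nhdsWithin_le_nhds (s := Set.Iio (π - θ₀)))
        simpa [Real.cos_pi_sub, hcosθ0] using this
      · filter_upwards [hIoo] with θ hθ
        exact Real.sqrt_pos.2 (hdpos θ hθ)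
    have hinv : Tendsto (fun θ => (Real.sqrt (a ^ 2 - Real.cos θ ^ 2))⁻¹)
        (nhdsWithin (π - θ₀) (Set.Iio (π - θ₀))) atTop := tendsto_inv_nhdsGT_zero.comp hden
    have hgt : Tendsto g (nhdsWithin (π - θ₀) (Set.Iio (π - θ₀))) atTop := by
      have := Filter.Tendsto.pos_mul_atTop hsinθ0 hnum hinv
      simpa [hg, div_eq_mul_inv] using this
    apply hgt.congr'
    filter_upwards [hIoo] with θ hθ
    exact (hderiv θ hθ).symm
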